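/- Let Γ be a colored tree. For every uncolored vertex v of Γ and every minimally complete subset Y ⊆ E(Γ): ⟨s_v, v_Y⟩ = 1 if Y contains at least one edge of the subtree rooted at v, and ⟨s_v, v_Y⟩ = 0 otherwise. -/

import Mathlib

noncomputable section
open Classical

/-- A rose tree whose leaves ("colored vertices") carry labels of type `α` and whose
internal vertices ("uncolored vertices") are unlabelled. -/
inductive CTree (α : Type) : Type
  | leaf (a : α) : CTree α
  | node (ts : List (CTree α)) : CTree α

namespace CTree

variable {α : Type}

/-- The subtree of `t` at a position `p` (a list of child indices), if it exists. -/
def sub : CTree α → List ℕ → Option (CTree α)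
  | t, [] => some t
  | leaf _, _ :: _ => none
  | node ts, i :: p =>
      match ts[i]? with
      | some c => sub c p
      | none => none

/-- All lists of natural numbers of length at most `k` with entries `< m`. -/
def allLists (m : ℕ) : ℕ → List (List ℕ)
  | 0 => [[]]
  | k + 1 => [] :: (List.range m).flatMap (fun i => (allLists m k).map (i :: ·))

/-- The finite set of positions of vertices of `t`. -/
def vertS (t : CTree α) : Finset (List ℕ) :=
  (allLists (sizeOf t) (sizeOf t)).toFinset.filter (fun p => (t.sub p).isSome)

/-- The finite set of positions of uncolored (internal) vertices of `t`. -/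
def uncS (t : CTree α) : Finset (List ℕ) :=
  (allLists (sizeOf t) (sizeOf t)).toFinset.filter (fun p => ∃ ts, t.sub p = some (node ts))

/-- The finite set of positions of colored vertices (leaves) of `t`. -/
def colS (t : CTree α) : Finset (List ℕ) :=
  (allLists (sizeOf t) (sizeOf t)).toFinset.filter (fun p => ∃ a, t.sub p = some (leaf a))

/-- Edges of `t` are identified with the positions of non-root vertices (an edge joins
the vertex at `p ≠ []` to its parent at `p.dropLast`). -/
def edgeS (t : CTree α) : Finset (List ℕ) := (vertS t).erase []

/-- `t` is a colored tree: every internal vertex has at least one child (so the leaves,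
i.e. the childless vertices, are exactly the colored vertices) and the root is
uncolored. -/
def IsColoredTree (t : CTree α) : Prop :=
  (∀ p, t.sub p ≠ some (node ([] : List (CTree α)))) ∧ ∃ ts, t = node ts

/-- The weight `w_d ∈ M` of an edge `d`: the sum of the dual basis vectors `e_u^*`
over uncolored vertices `u` that are descendants of the upper endpoint of `d` but not
descendants of the lower endpoint of `d`. -/
def wt (t : CTree α) (d : List ℕ) : List ℕ → ℤ := fun u =>
  if u ∈ uncS t ∧ d.dropLast <+: u ∧ ¬ d <+: u then 1 else 0

/-- `s_v ∈ M` : the sum of `e_u^*` over the uncolored descendants `u` of `v`;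
`s(Γ) = sv t []`. -/
def sv (t : CTree α) (v : List ℕ) : List ℕ → ℤ := fun u =>
  if u ∈ uncS t ∧ v <+: u then 1 else 0

/-- The pairing between `M = Hom(ℤ^g, ℤ)` and `ℤ^g` (both realized as integer-valued
functions on the uncolored vertices of `t`). -/
def pairZ (t : CTree α) (μ x : List ℕ → ℤ) : ℤ := ∑ p ∈ uncS t, μ p * x p

/-- The pairing between `M` and `ℝ^g`. -/
def pairR (t : CTree α) (μ : List ℕ → ℤ) (x : List ℕ → ℝ) : ℝ :=
  ∑ p ∈ uncS t, (μ p : ℝ) * x p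

/-- The multiset of edges of the (downward) path from the vertex `v` to the vertex `c`;
each edge occurs with multiplicity one. -/
def pathEdges (t : CTree α) (v c : List ℕ) : Multiset (List ℕ) :=
  ((edgeS t).filter (fun d => v <+: d ∧ d ≠ v ∧ d <+: c)).val

/-- The relation `A ∼ B` on multisets of edges: `A` and `B` consist exactly of the edges
of two non-self-crossing paths from a common vertex to two colored vertices. -/
def Sim (t : CTree α) (A B : Multiset (List ℕ)) : Prop :=
  ∃ v ∈ vertS t, ∃ c₁ ∈ colS t, ∃ c₂ ∈ colS t, v <+: c₁ ∧ v <+: c₂ ∧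
    A = pathEdges t v c₁ ∧ B = pathEdges t v c₂

/-- `Y` is a minimally complete subset of the set of edges of `t`: every
(non-self-crossing) path from the root to a colored vertex contains exactly one edge
of `Y`. -/
def MinComplete (t : CTree α) (Y : Finset (List ℕ)) : Prop :=
  Y ⊆ edgeS t ∧ ∀ c ∈ colS t, ∃! d, d ∈ Y ∧ d <+: c

/-- The finite set of minimally complete subsets of the edge set of `t`. -/
def MCfin (t : CTree α) : Finset (Finset (List ℕ)) :=
  (edgeS t).powerset.filter (fun Y => MinComplete t Y)

/-- The dual cone `C(Γ) = {x ∈ ℝ^g | ⟨w_d, x⟩ ≥ 0 for all edges d}`. -/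
def dualCone (t : CTree α) : Set (List ℕ → ℝ) :=
  {x | (∀ p, p ∉ uncS t → x p = 0) ∧ ∀ d ∈ edgeS t, 0 ≤ pairR t (wt t d) x}

/-- The ray spanned by a vector `v`. -/
def ray (v : List ℕ → ℝ) : Set (List ℕ → ℝ) := {x | ∃ c : ℝ, 0 ≤ c ∧ x = c • v}

/-- `F` is a one-dimensional face (extreme ray) of the convex cone `C`. -/
def IsOneDimFace (C F : Set (List ℕ → ℝ)) : Prop :=
  F ⊆ C ∧ (∃ v, v ≠ 0 ∧ F = ray v) ∧
    ∀ x ∈ C, ∀ y ∈ C, x + y ∈ F → x ∈ F ∧ y ∈ F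

/-- The convex cone generated by a set `G ⊆ ℤ^g` inside `ℝ^g`: all finite nonnegative
real combinations of elements of `G`. -/
def coneHull (G : Set (List ℕ → ℤ)) : Set (List ℕ → ℝ) :=
  {x | ∃ (F : Finset (List ℕ → ℤ)) (c : (List ℕ → ℤ) → ℝ),
    ↑F ⊆ G ∧ (∀ v ∈ F, 0 ≤ c v) ∧
    x = ∑ v ∈ F, c v • (fun p => ((v p : ℤ) : ℝ))}

/-- `e_{v_0} ∈ ℤ^g`: the basis vector of the root vertex. -/
def e0 : List ℕ → ℤ := fun p => if p = [] then 1 else 0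

/-- The inclusion `ℤ^{g_i} → ℤ^g` corresponding to the `i`-th principal subtree. -/
def shift (i : ℕ) (f : List ℕ → ℤ) : List ℕ → ℤ := fun p =>
  match p with
  | [] => 0
  | j :: q => if j = i then f q else 0

def isNodeB : CTree α → Bool
  | leaf _ => false
  | node _ => true

/-- The recursively defined set `G(Γ) ⊆ ℤ^g`: `G(Γ)` consists of all vectors
`e_{v₀} + ∑_{i ∈ J} (w_i - e_{v₀})` where `J` ranges over subsets of the set of indices
of non-trivial principal subtrees and `w_i ∈ G(Γ_i)` (in particular if `g = 1` this is
just `{e_{v₀}}`). -/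
def Gset : CTree α → Set (List ℕ → ℤ)
  | leaf _ => ∅
  | node ts =>
      {v | ∃ (J : Finset (Fin ts.length)) (w : Fin ts.length → (List ℕ → ℤ)),
        (∀ i ∈ J, (ts.get i).isNodeB = true ∧ w i ∈ Gset (ts.get i)) ∧
        v = e0 + ∑ i ∈ J, (shift i.1 (w i) - e0)}
  termination_by t => sizeOf t
  decreasing_by
    have h1 : ts.get i ∈ ts := List.get_mem ts i
    have h2 := List.sizeOf_lt_of_mem h1
    simp only [CTree.node.sizeOf_spec]
    omega

/-- Transport of a set of edges of `Γ` to the `i`-th principal subtree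
(`Y ∩ E(Γ_i)`, rewritten in the coordinates of `Γ_i`). -/
def sect (i : ℕ) (Y : Finset (List ℕ)) : Finset (List ℕ) :=
  (Y.filter (fun p => p.head? = some i)).image List.tail

/-- The recursively defined vector `v_Y ∈ ℤ^g` attached to a (minimally complete) set
of edges `Y`: `v_Y = e_{v₀} + ∑_{i ∈ I} (v_{Y_i} - e_{v₀})` where
`I = {i | d_i ∉ Y}` and `Y_i = Y ∩ E(Γ_i)` (if `g = 1` this is just `e_{v₀}`). -/
def vY : CTree α → Finset (List ℕ) → (List ℕ → ℤ)
  | leaf _, _ => 0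
  | node ts, Y =>
      e0 + ∑ i ∈ Finset.univ.filter (fun i : Fin ts.length => [i.1] ∉ Y),
        (shift i.1 (vY (ts.get i) (sect i.1 Y)) - e0)
  termination_by t => sizeOf t
  decreasing_by
    have h1 : ts.get i ∈ ts := List.get_mem ts i
    have h2 := List.sizeOf_lt_of_mem h1
    simp only [CTree.node.sizeOf_spec]
    omega

/-- The set of balanced labellings `X(Γ) ⊆ ℂ^{E(Γ)}`. -/
def Xbal (t : CTree α) : Set (List ℕ → ℂ) :=
  {x | ∀ v ∈ uncS t, ∀ c ∈ colS t, ∀ c' ∈ colS t, v <+: c → v <+: c' →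
    ((pathEdges t v c).map x).prod = ((pathEdges t v c').map x).prod}

/-- `Y ⊆ E(Γ)` is complete: for every finite multiset `A` of edges, the monomial
`∏_{d ∈ A} x_d` vanishes identically on `{x ∈ X(Γ) | x_y = 0 ∀ y ∈ Y}` if and only if
`A` contains at least one edge belonging to `Y`. -/
def CompleteSet (t : CTree α) (Y : Finset (List ℕ)) : Prop :=
  ∀ A : Multiset (List ℕ), (∀ d ∈ A, d ∈ edgeS t) →
    ((∀ x ∈ Xbal t, (∀ y ∈ Y, x y = 0) → (A.map x).prod = 0) ↔ ∃ d ∈ A, d ∈ Y)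

/-- A partition of a type `I`: a finite collection of nonempty pairwise disjoint
subsets covering `I`. -/
def IsPart {I : Type} (P : Finset (Finset I)) : Prop :=
  (∀ S ∈ P, S ≠ ∅) ∧ ∀ a : I, ∃! S, S ∈ P ∧ a ∈ S

/-- The tree with a single uncolored vertex whose children are the colored vertices
labelled by the elements of `S`. -/
def blockTree {I : Type} (S : Finset I) : CTree I := node (S.toList.map leaf)

/-- The colored tree `Γ_P` of a partition `P`: the root has one child for each block
`S ∈ P`, an uncolored vertex whose children are colored vertices labelled by the
elements of `S`. -/
def gammaP {I : Type} (P : Finset (Finset I)) : CTree I := node (P.toList.map blockTree)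

/-- A tree homomorphism `t → t'`, described by a map `f` on vertex positions: it sends
root to root, vertices to vertices, the two endpoints of any edge to the two endpoints
of an edge, and restricts to a label-preserving bijection between the colored
vertices. -/
def TreeHom {I : Type} (t t' : CTree I) (f : List ℕ → List ℕ) : Prop :=
  f [] = [] ∧
  (∀ p ∈ vertS t, f p ∈ vertS t') ∧
  (∀ p ∈ vertS t, p ≠ [] →
    (f p ≠ [] ∧ (f p).dropLast = f p.dropLast) ∨
    (f p.dropLast ≠ [] ∧ (f p.dropLast).dropLast = f p)) ∧
  (∀ p a, t.sub p = some (leaf a) → t'.sub (f p) = some (leaf a)) ∧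
  Set.BijOn f {p | ∃ a, t.sub p = some (leaf a)} {q | ∃ a, t'.sub q = some (leaf a)}

/-- A partition `P` of the label set is compatible with the colored tree `t` if there
exists a tree homomorphism `t → Γ_P`. -/
def Compatible {I : Type} (t : CTree I) (P : Finset (Finset I)) : Prop :=
  ∃ f, TreeHom t (gammaP P) f

/-- `C_y ⊆ I` : the labels of the colored vertices whose path from the root contains
the edge `y`. -/
def Cy {I : Type} [Fintype I] [DecidableEq I] (t : CTree I) (y : List ℕ) : Finset I :=
  Finset.univ.filter (fun a => ∃ p, t.sub p = some (leaf a) ∧ y <+: p)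

end CTree

namespace CTree
variable {α : Type}

lemma sub_nil (t : CTree α) : t.sub [] = some t := by cases t <;> rfl

lemma sub_cons_lt (ts : List (CTree α)) {i : ℕ} (h : i < ts.length) (p : List ℕ) :
    (node ts).sub (i :: p) = (ts.get ⟨i, h⟩).sub p := by
  simp [sub, List.getElem?_eq_getElem h]

lemma sub_cons_ge (ts : List (CTree α)) {i : ℕ} (h : ts.length ≤ i) (p : List ℕ) :
    (node ts).sub (i :: p) = none := by
  simp [sub, List.getElem?_eq_none h]

lemma sub_append : ∀ (p : List ℕ) (t : CTree α) (q : List ℕ),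
    t.sub (p ++ q) = (t.sub p).bind (fun s => s.sub q)
  | [], t, q => by cases t <;> rfl
  | i :: p, leaf a, q => rfl
  | i :: p, node ts, q => by
      by_cases h : i < ts.length
      · rw [show (i :: p) ++ q = i :: (p ++ q) from rfl, sub_cons_lt ts h, sub_cons_lt ts h,
          sub_append p]
      · rw [show (i :: p) ++ q = i :: (p ++ q) from rfl,
          sub_cons_ge ts (le_of_not_gt h), sub_cons_ge ts (le_of_not_gt h)]
        rfl

lemma one_le_sizeOf (t : CTree α) : 1 ≤ sizeOf t := by
  cases t <;> simp

lemma length_lt_sizeOf : ∀ ts : List (CTree α), ts.length < sizeOf ts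
  | [] => by simp
  | a :: l => by
      have h1 := length_lt_sizeOf l
      have h2 := one_le_sizeOf a
      simp only [List.length_cons, List.cons.sizeOf_spec]
      omega

end CTree
namespace CTree
variable {α : Type}

lemma sub_bounds : ∀ (t : CTree α) (p : List ℕ), (t.sub p).isSome →
    p.length < sizeOf t ∧ ∀ i ∈ p, i < sizeOf t
  | t, [] => fun _ => by
      have := one_le_sizeOf t
      exact ⟨by simp; omega, by simp⟩
  | leaf a, i :: p => fun h => by simp [sub] at h
  | node ts, i :: p => fun h => by
      by_cases hi : i < ts.length
      · rw [sub_cons_lt ts hi] at h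
        have hmem : ts.get ⟨i, hi⟩ ∈ ts := List.get_mem ts ⟨i, hi⟩
        have hsz : sizeOf (ts.get ⟨i, hi⟩) < sizeOf ts := List.sizeOf_lt_of_mem hmem
        have ih := sub_bounds (ts.get ⟨i, hi⟩) p h
        have hlen := length_lt_sizeOf ts
        constructor
        · simp only [List.length_cons, CTree.node.sizeOf_spec]; omega
        · intro j hj
          simp only [CTree.node.sizeOf_spec]
          rcases List.mem_cons.1 hj with rfl | hj
          · omega
          · have := ih.2 j hj; omega
      · rw [sub_cons_ge ts (le_of_not_gt hi)] at h; simp at h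

lemma mem_allLists {m k : ℕ} {p : List ℕ} :
    p ∈ allLists m k ↔ p.length ≤ k ∧ ∀ i ∈ p, i < m := by
  induction k generalizing p with
  | zero =>
      simp only [allLists, List.mem_singleton]
      constructor
      · rintro rfl; simp
      · rintro ⟨h1, _⟩; exact List.eq_nil_of_length_eq_zero (Nat.le_zero.1 h1)
  | succ k ih =>
      simp only [allLists, List.mem_cons, List.mem_flatMap, List.mem_map, List.mem_range]
      constructor
      · rintro (rfl | ⟨i, hi, q, hq, rfl⟩)
        · simp
        · rcases ih.1 hq with ⟨h1, h2⟩
          refine ⟨by simpa using h1, ?_⟩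
          intro j hj
          rcases List.mem_cons.1 hj with rfl | hj
          · exact hi
          · exact h2 j hj
      · rintro ⟨h1, h2⟩
        cases p with
        | nil => exact Or.inl rfl
        | cons i q =>
            refine Or.inr ⟨i, h2 i List.mem_cons_self, q,
              ih.2 ⟨by simpa using h1, fun j hj => h2 j (List.mem_cons_of_mem _ hj)⟩, rfl⟩

lemma mem_allLists_of_sub {t : CTree α} {p : List ℕ} (h : (t.sub p).isSome) :
    p ∈ (allLists (sizeOf t) (sizeOf t)).toFinset := by
  rcases sub_bounds t p h with ⟨h1, h2⟩
  exact List.mem_toFinset.2 (mem_allLists.2 ⟨le_of_lt h1, h2⟩)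

lemma mem_vertS {t : CTree α} {p : List ℕ} : p ∈ vertS t ↔ (t.sub p).isSome := by
  constructor
  · intro h; exact (Finset.mem_filter.1 h).2
  · intro h; exact Finset.mem_filter.2 ⟨mem_allLists_of_sub h, h⟩

lemma mem_uncS {t : CTree α} {p : List ℕ} :
    p ∈ uncS t ↔ ∃ ts, t.sub p = some (node ts) := by
  constructor
  · intro h; exact (Finset.mem_filter.1 h).2
  · intro h
    rcases h with ⟨ts, hts⟩
    exact Finset.mem_filter.2 ⟨mem_allLists_of_sub (by simp [hts]), ⟨ts, hts⟩⟩

lemma mem_colS {t : CTree α} {p : List ℕ} :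
    p ∈ colS t ↔ ∃ a, t.sub p = some (leaf a) := by
  constructor
  · intro h; exact (Finset.mem_filter.1 h).2
  · intro h
    rcases h with ⟨a, ha⟩
    exact Finset.mem_filter.2 ⟨mem_allLists_of_sub (by simp [ha]), ⟨a, ha⟩⟩

lemma mem_edgeS {t : CTree α} {p : List ℕ} :
    p ∈ edgeS t ↔ p ≠ [] ∧ (t.sub p).isSome := by
  rw [edgeS, Finset.mem_erase, mem_vertS]

end CTree
namespace CTree
variable {α : Type}

lemma mem_uncS_cons {ts : List (CTree α)} {j : ℕ} (h : j < ts.length) {q : List ℕ} :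
    (j :: q) ∈ uncS (node ts) ↔ q ∈ uncS (ts.get ⟨j, h⟩) := by
  rw [mem_uncS, mem_uncS, sub_cons_lt ts h]

lemma mem_colS_cons {ts : List (CTree α)} {j : ℕ} (h : j < ts.length) {q : List ℕ} :
    (j :: q) ∈ colS (node ts) ↔ q ∈ colS (ts.get ⟨j, h⟩) := by
  rw [mem_colS, mem_colS, sub_cons_lt ts h]

lemma uncS_cons_len {ts : List (CTree α)} {j : ℕ} {q : List ℕ}
    (h : (j :: q) ∈ uncS (node ts)) : j < ts.length := by
  by_contra hj
  rcases mem_uncS.1 h with ⟨ts', hts'⟩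
  rw [sub_cons_ge ts (le_of_not_gt hj)] at hts'
  exact absurd hts' (Option.some_ne_none _).symm

/-- every vertex has a colored vertex below it -/
lemma exists_leaf : ∀ (t : CTree α), (∀ p, t.sub p ≠ some (node ([] : List (CTree α)))) →
    ∃ c a, t.sub c = some (leaf a)
  | leaf a, _ => ⟨[], a, rfl⟩
  | node ts, h => by
      have hne : ts ≠ [] := by
        intro hts
        exact h [] (by rw [hts]; rfl)
      have h0 : 0 < ts.length := List.length_pos_iff.2 hne
      have hmem : ts.get ⟨0, h0⟩ ∈ ts := List.get_mem ts ⟨0, h0⟩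
      have hsz : sizeOf (ts.get ⟨0, h0⟩) < sizeOf ts := List.sizeOf_lt_of_mem hmem
      have hsub : ∀ p, (ts.get ⟨0, h0⟩).sub p ≠ some (node ([] : List (CTree α))) := by
        intro p hp
        exact h (0 :: p) (by rw [sub_cons_lt ts h0]; exact hp)
      rcases exists_leaf (ts.get ⟨0, h0⟩) hsub with ⟨c, a, hc⟩
      exact ⟨0 :: c, a, by rw [sub_cons_lt ts h0]; exact hc⟩
  termination_by t => sizeOf t
  decreasing_by simp only [CTree.node.sizeOf_spec]; omega

lemma exists_leaf_below (t : CTree α)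
    (hcol : ∀ p, t.sub p ≠ some (node ([] : List (CTree α))))
    {p : List ℕ} (hp : (t.sub p).isSome) : ∃ c, c ∈ colS t ∧ p <+: c := by
  rcases Option.isSome_iff_exists.1 hp with ⟨s, hs⟩
  have hsub : ∀ q, s.sub q ≠ some (node ([] : List (CTree α))) := by
    intro q hq
    apply hcol (p ++ q)
    rw [sub_append, hs]; exact hq
  rcases exists_leaf s hsub with ⟨c', a, hc'⟩
  refine ⟨p ++ c', mem_colS.2 ⟨a, ?_⟩, List.prefix_append p c'⟩
  rw [sub_append, hs]; exact hc'

lemma minComplete_nonempty {t : CTree α}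
    (hcol : ∀ p, t.sub p ≠ some (node ([] : List (CTree α))))
    {Y : Finset (List ℕ)} (hY : t.MinComplete Y) : Y.Nonempty := by
  rcases exists_leaf_below t hcol (p := []) (by rw [sub_nil]; rfl) with ⟨c, hc, _⟩
  rcases hY.2 c hc with ⟨d, ⟨hd, _⟩, _⟩
  exact ⟨d, hd⟩

lemma mem_sect {i : ℕ} {Y : Finset (List ℕ)} {d : List ℕ} :
    d ∈ sect i Y ↔ (i :: d) ∈ Y := by
  simp only [sect, Finset.mem_image, Finset.mem_filter]
  constructor
  · rintro ⟨e, ⟨he, hh⟩, rfl⟩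
    cases e with
    | nil => simp at hh
    | cons j e' =>
        simp only [List.head?_cons, Option.some.injEq] at hh
        subst hh; exact he
  · intro h
    exact ⟨i :: d, ⟨h, rfl⟩, rfl⟩

lemma minComplete_sect {ts : List (CTree α)} {Y : Finset (List ℕ)}
    (hY : MinComplete (node ts) Y) {i : ℕ} (hlt : i < ts.length) (hi : [i] ∉ Y) :
    MinComplete (ts.get ⟨i, hlt⟩) (sect i Y) := by
  constructor
  · intro d hd
    have hiY : (i :: d) ∈ Y := mem_sect.1 hd
    have hedge := hY.1 hiY
    rw [mem_edgeS] at hedge ⊢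
    have hdne : d ≠ [] := by
      rintro rfl; exact hi hiY
    refine ⟨hdne, ?_⟩
    rw [sub_cons_lt ts hlt] at hedge
    exact hedge.2
  · intro c hc
    have hcc : (i :: c) ∈ colS (node ts) := (mem_colS_cons hlt).2 hc
    rcases hY.2 (i :: c) hcc with ⟨d, ⟨hdY, hdpre⟩, huniq⟩
    have hdne : d ≠ [] := (mem_edgeS.1 (hY.1 hdY)).1
    cases d with
    | nil => exact absurd rfl hdne
    | cons j d' =>
        rcases List.cons_prefix_cons.1 hdpre with ⟨rfl, hd'⟩
        refine ⟨d', ⟨mem_sect.2 hdY, hd'⟩, ?_⟩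
        intro e ⟨heY, hepre⟩
        have := huniq (j :: e) ⟨mem_sect.1 heY, List.cons_prefix_cons.2 ⟨rfl, hepre⟩⟩
        exact (List.cons.inj this).2

end CTree
namespace CTree
variable {α : Type}

lemma vY_node (ts : List (CTree α)) (Y : Finset (List ℕ)) :
    vY (node ts) Y = e0 + ∑ i ∈ Finset.univ.filter (fun i : Fin ts.length => [i.1] ∉ Y),
        (shift i.1 (vY (ts.get i) (sect i.1 Y)) - e0) := by
  rw [vY]

lemma vY_nil (ts : List (CTree α)) (Y : Finset (List ℕ)) :
    vY (node ts) Y [] =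
      1 - ((Finset.univ.filter (fun i : Fin ts.length => [i.1] ∉ Y)).card : ℤ) := by
  rw [vY_node]
  simp only [Pi.add_apply, Finset.sum_apply, Pi.sub_apply, e0, shift, if_pos rfl]
  rw [Finset.sum_const]
  simp
  ring

lemma vY_cons (ts : List (CTree α)) (Y : Finset (List ℕ)) {j : ℕ} (h : j < ts.length)
    (q : List ℕ) :
    vY (node ts) Y (j :: q) =
      if [j] ∉ Y then vY (ts.get ⟨j, h⟩) (sect j Y) q else 0 := by
  rw [vY_node]
  simp only [Pi.add_apply, Finset.sum_apply, Pi.sub_apply, e0, shift]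
  rw [if_neg (List.cons_ne_nil j q)]
  have hrw : ∀ i : Fin ts.length,
      ((if j = i.1 then vY (ts.get i) (sect i.1 Y) q else 0) - 0) =
      if (⟨j, h⟩ : Fin ts.length) = i then vY (ts.get i) (sect i.1 Y) q else 0 := by
    intro i
    rw [sub_zero]
    congr 1
    simp [Fin.ext_iff]
  rw [Finset.sum_congr rfl (fun i _ => hrw i), Finset.sum_ite_eq]
  simp

end CTree
namespace CTree
variable {α : Type}

lemma cons_inj (j : ℕ) : Function.Injective (j :: · : List ℕ → List ℕ) :=
  fun a b h => by injection h

lemma cond_iff {Y : Finset (List ℕ)} {j : ℕ} (hj : [j] ∉ Y) (q : List ℕ) :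
    (∃ d ∈ Y, (j :: q) <+: d.dropLast) ↔ ∃ d ∈ sect j Y, q <+: d.dropLast := by
  constructor
  · rintro ⟨d, hdY, hpre⟩
    match d with
    | [] => simp [List.prefix_nil] at hpre
    | [k] => simp [List.prefix_nil] at hpre
    | k :: k2 :: d'' =>
        rw [List.dropLast_cons₂] at hpre
        rcases List.cons_prefix_cons.1 hpre with ⟨rfl, h2⟩
        exact ⟨k2 :: d'', mem_sect.2 hdY, h2⟩
  · rintro ⟨d', hd', hpre⟩
    have hdY : (j :: d') ∈ Y := mem_sect.1 hd'
    match d' with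
    | [] => exact absurd hdY hj
    | k :: d'' =>
        refine ⟨j :: k :: d'', hdY, ?_⟩
        rw [List.dropLast_cons₂]
        exact List.cons_prefix_cons.2 ⟨rfl, hpre⟩

lemma prefix_singleton {d : List ℕ} {x : ℕ} (hne : d ≠ []) (h : d <+: [x]) : d = [x] := by
  match d with
  | [] => exact absurd rfl hne
  | k :: d' =>
      rcases List.cons_prefix_cons.1 h with ⟨rfl, h2⟩
      rw [List.prefix_nil.1 h2]

lemma erase_uncS_eq (ts : List (CTree α)) :
    (uncS (node ts)).erase [] =
      Finset.univ.biUnion (fun j : Fin ts.length => (uncS (ts.get j)).image (j.1 :: ·)) := by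
  ext p
  simp only [Finset.mem_erase, Finset.mem_biUnion, Finset.mem_univ, true_and,
    Finset.mem_image]
  constructor
  · rintro ⟨hne, hp⟩
    match p with
    | [] => exact absurd rfl hne
    | j :: q =>
        have hlen : j < ts.length := uncS_cons_len hp
        exact ⟨⟨j, hlen⟩, q, (mem_uncS_cons hlen).1 hp, rfl⟩
  · rintro ⟨j, q, hq, rfl⟩
    exact ⟨List.cons_ne_nil _ _, (mem_uncS_cons j.2).2 hq⟩

lemma filter_uncS_cons (ts : List (CTree α)) {j : ℕ} (hlen : j < ts.length) (q : List ℕ) :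
    (uncS (node ts)).filter (fun p => (j :: q) <+: p) =
      ((uncS (ts.get ⟨j, hlen⟩)).filter (fun p => q <+: p)).image (j :: ·) := by
  ext p
  simp only [Finset.mem_filter, Finset.mem_image]
  constructor
  · rintro ⟨hp, hpre⟩
    match p with
    | [] => simp [List.prefix_nil] at hpre
    | k :: r =>
        rcases List.cons_prefix_cons.1 hpre with ⟨rfl, h2⟩
        exact ⟨r, ⟨(mem_uncS_cons hlen).1 hp, h2⟩, rfl⟩
  · rintro ⟨r, ⟨hr, hpre⟩, rfl⟩
    exact ⟨(mem_uncS_cons hlen).2 hr, List.cons_prefix_cons.2 ⟨rfl, hpre⟩⟩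

end CTree
namespace CTree
variable {α : Type}

lemma hcol_get {ts : List (CTree α)}
    (hcol : ∀ p, (node ts).sub p ≠ some (node ([] : List (CTree α))))
    {j : ℕ} (h : j < ts.length) :
    ∀ p, (ts.get ⟨j, h⟩).sub p ≠ some (node ([] : List (CTree α))) := by
  intro p hp
  exact hcol (j :: p) (by rw [sub_cons_lt ts h]; exact hp)

lemma get_node_of_notmem {ts : List (CTree α)} {Y : Finset (List ℕ)}
    (hY : MinComplete (node ts) Y) {j : ℕ} (h : j < ts.length) (hj : [j] ∉ Y) :
    ∃ tsj, ts.get ⟨j, h⟩ = node tsj := by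
  cases hget : ts.get ⟨j, h⟩ with
  | node tsj => exact ⟨tsj, rfl⟩
  | leaf a =>
      exfalso
      have hcj : [j] ∈ colS (node ts) := by
        apply mem_colS.2
        refine ⟨a, ?_⟩
        rw [show [j] = j :: ([] : List ℕ) from rfl, sub_cons_lt ts h, hget]
        rfl
      rcases hY.2 [j] hcj with ⟨d, ⟨hdY, hdpre⟩, _⟩
      have hdne : d ≠ [] := (mem_edgeS.1 (hY.1 hdY)).1
      rw [prefix_singleton hdne hdpre] at hdY
      exact hj hdY

lemma key : ∀ (n : ℕ) (t : CTree α), sizeOf t ≤ n → t.IsColoredTree →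
    ∀ v ∈ uncS t, ∀ Y : Finset (List ℕ), t.MinComplete Y →
      (∑ p ∈ (uncS t).filter (fun p => v <+: p), vY t Y p) =
        if ∃ d ∈ Y, v <+: d.dropLast then 1 else 0 := by
  intro n
  induction n with
  | zero => intro t hsz; have := one_le_sizeOf t; omega
  | succ n ih =>
    rintro t hsz ⟨hcol, ts, rfl⟩ v hv Y hY
    have hszget : ∀ j : Fin ts.length, sizeOf (ts.get j) ≤ n := by
      intro j
      have h1 : ts.get j ∈ ts := List.get_mem ts j
      have h2 := List.sizeOf_lt_of_mem h1
      simp only [CTree.node.sizeOf_spec] at hsz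
      omega
    cases v with
    | nil =>
        -- RHS is 1
        obtain ⟨d0, hd0⟩ := minComplete_nonempty hcol hY
        rw [if_pos ⟨d0, hd0, List.nil_prefix⟩]
        rw [Finset.filter_true_of_mem (fun p _ => List.nil_prefix)]
        have h0 : ([] : List ℕ) ∈ uncS (node ts) := mem_uncS.2 ⟨ts, sub_nil _⟩
        rw [← Finset.add_sum_erase _ _ h0, erase_uncS_eq ts]
        have hdisj : ∀ j₁ ∈ (Finset.univ : Finset (Fin ts.length)), ∀ j₂ ∈ Finset.univ,
            j₁ ≠ j₂ → Disjoint ((uncS (ts.get j₁)).image (j₁.1 :: ·))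
              ((uncS (ts.get j₂)).image (j₂.1 :: ·)) := by
          intro j₁ _ j₂ _ hne
          rw [Finset.disjoint_left]
          rintro p hp1 hp2
          rcases Finset.mem_image.1 hp1 with ⟨q1, _, rfl⟩
          rcases Finset.mem_image.1 hp2 with ⟨q2, _, heq⟩
          apply hne
          have := (List.cons.inj heq).1
          exact Fin.ext this.symm
        rw [Finset.sum_biUnion hdisj]
        have hinner : ∀ j : Fin ts.length,
            (∑ p ∈ (uncS (ts.get j)).image (j.1 :: ·), vY (node ts) Y p) =
            if [j.1] ∉ Y then 1 else 0 := by
          intro j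
          rw [Finset.sum_image (fun a _ b _ h => cons_inj j.1 h)]
          by_cases hj : [j.1] ∈ Y
          · rw [Finset.sum_congr rfl (fun q _ => by
              rw [vY_cons ts Y j.2 q, if_neg (by simpa using hj)])]
            simp [hj]
          · rw [Finset.sum_congr rfl (fun q _ => by
              rw [vY_cons ts Y j.2 q, if_pos hj])]
            rw [if_pos hj]
            -- subtree is a node
            obtain ⟨tsj, hget⟩ := get_node_of_notmem hY j.2 hj
            have hctj : (ts.get j).IsColoredTree := ⟨hcol_get hcol j.2, tsj, hget⟩
            have h0j : ([] : List ℕ) ∈ uncS (ts.get j) :=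
              mem_uncS.2 ⟨tsj, by rw [hget]; rfl⟩
            have hYj : (ts.get j).MinComplete (sect j.1 Y) := minComplete_sect hY j.2 hj
            have := ih (ts.get j) (hszget j) hctj [] h0j (sect j.1 Y) hYj
            rw [Finset.filter_true_of_mem (fun p _ => List.nil_prefix)] at this
            rw [this, if_pos]
            obtain ⟨d1, hd1⟩ := minComplete_nonempty (hcol_get hcol j.2) hYj
            exact ⟨d1, hd1, List.nil_prefix⟩
        rw [Finset.sum_congr rfl (fun j _ => hinner j)]
        rw [vY_nil ts Y, Finset.sum_boole]
        ring
    | cons j q =>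
        have hlen : j < ts.length := uncS_cons_len hv
        have hq : q ∈ uncS (ts.get ⟨j, hlen⟩) := (mem_uncS_cons hlen).1 hv
        rw [filter_uncS_cons ts hlen q,
          Finset.sum_image (fun a _ b _ h => cons_inj j h)]
        by_cases hjY : [j] ∈ Y
        · rw [Finset.sum_congr rfl (fun p _ => by
            rw [vY_cons ts Y hlen p, if_neg (by simpa using hjY)])]
          rw [Finset.sum_const_zero, if_neg]
          rintro ⟨d, hdY, hdpre⟩
          have hdedge := mem_edgeS.1 (hY.1 hdY)
          have hdc : (j :: q) <+: d := hdpre.trans (List.dropLast_prefix d)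
          rcases exists_leaf_below (node ts) hcol hdedge.2 with ⟨c, hc, hdcpre⟩
          rcases hY.2 c hc with ⟨e, _, huniq⟩
          have h1 : d = e := huniq d ⟨hdY, hdcpre⟩
          have h2 : [j] = e := huniq [j] ⟨hjY,
            List.IsPrefix.trans ⟨q, rfl⟩ (hdc.trans hdcpre)⟩
          rw [← h2] at h1
          rw [h1] at hdpre
          simp [List.prefix_nil] at hdpre
        · rw [Finset.sum_congr rfl (fun p _ => by
            rw [vY_cons ts Y hlen p, if_pos hjY])]
          -- subtree is a node since q ∈ uncS of it
          have hget : ∃ tsj, ts.get ⟨j, hlen⟩ = node tsj := by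
            rcases mem_uncS.1 hq with ⟨ts', hts'⟩
            cases hg : ts.get ⟨j, hlen⟩ with
            | node tsj => exact ⟨tsj, rfl⟩
            | leaf a =>
                exfalso
                rw [hg] at hts'
                cases q with
                | nil => simp [sub] at hts'
                | cons k r => simp [sub] at hts'
          obtain ⟨tsj, hgeteq⟩ := hget
          have hctj : (ts.get ⟨j, hlen⟩).IsColoredTree :=
            ⟨hcol_get hcol hlen, tsj, hgeteq⟩
          have hYj := minComplete_sect hY hlen hjY
          rw [ih (ts.get ⟨j, hlen⟩) (hszget ⟨j, hlen⟩) hctj q hq (sect j Y) hYj]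
          rw [if_congr (Iff.symm (cond_iff hjY q)) rfl rfl]

end CTree

/-- For every uncolored vertex `v` and every minimally complete
`Y ⊆ E(Γ)`: `⟨s_v, v_Y⟩ = 1` if `Y` contains at least one edge of the subtree rooted
at `v`, and `⟨s_v, v_Y⟩ = 0` otherwise. -/
theorem pairing_sv_vY {α : Type} (t : CTree α) (ht : t.IsColoredTree) :
    ∀ v ∈ CTree.uncS t, ∀ Y : Finset (List ℕ), t.MinComplete Y →
      CTree.pairZ t (CTree.sv t v) (CTree.vY t Y) =
        if ∃ d ∈ Y, v <+: d.dropLast then 1 else 0 := by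
  intro v hv Y hY
  have hpair : CTree.pairZ t (CTree.sv t v) (CTree.vY t Y) =
      ∑ p ∈ (CTree.uncS t).filter (fun p => v <+: p), CTree.vY t Y p := by
    rw [CTree.pairZ, Finset.sum_filter]
    apply Finset.sum_congr rfl
    intro p hp
    by_cases h : v <+: p
    · simp [CTree.sv, hp, h]
    · simp [CTree.sv, h]
  rw [hpair]
  exact CTree.key (sizeOf t) t le_rfl ht v hv Y hY
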